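/- Let W : [0, ∞) → R be a nonnegative differentiable function satisfying W'(t) ≤ -ε₁ W(t) - ε₂ W(t)^{(r+1)/2} for constants ε₁, ε₂ > 0 and 0 < r < 1, whenever W(t) > 0. Then W(t) = 0 for all t ≥ T, where T = (2/(ε₁(1-r))) ln((ε₁ W(0)^{(1-r)/2} + ε₂)/ε₂). -/

import Mathlib

/-- Zero persistence: once `W` hits zero, it stays zero. -/
lemma stmt11_zero_persist (W : ℝ → ℝ) (ε₁ ε₂ r : ℝ)
    (hε₁ : 0 < ε₁) (hε₂ : 0 < ε₂)
    (hWpos : ∀ t, 0 ≤ t → 0 ≤ W t)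
    (hWdiff : ∀ t, 0 ≤ t → DifferentiableAt ℝ W t)
    (hWineq : ∀ t, 0 ≤ t → 0 < W t →
      deriv W t ≤ -ε₁ * W t - ε₂ * (W t) ^ ((r + 1) / 2))
    {s u : ℝ} (hs : 0 ≤ s) (hsu : s ≤ u) (hWs : W s = 0) : W u = 0 := by
  by_contra h
  have hWu : 0 < W u := lt_of_le_of_ne (hWpos u (hs.trans hsu)) (Ne.symm h)
  have hslt : s < u := lt_of_le_of_ne hsu (by rintro rfl; exact h hWs)
  set A : Set ℝ := Set.Icc s u ∩ W ⁻¹' {0} with hA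
  have hWcont : ContinuousOn W (Set.Icc s u) := fun x hx =>
    ((hWdiff x (hs.trans hx.1)).continuousAt).continuousWithinAt
  have hAclosed : IsClosed A :=
    hWcont.preimage_isClosed_of_isClosed isClosed_Icc isClosed_singleton
  have hAcomp : IsCompact A :=
    isCompact_Icc.of_isClosed_subset hAclosed Set.inter_subset_left
  have hAne : A.Nonempty := ⟨s, ⟨le_refl s, hsu⟩, hWs⟩
  have hmem := hAcomp.sSup_mem hAne
  obtain ⟨s', hs'Icc, hWs', hub⟩ : ∃ s', s' ∈ Set.Icc s u ∧ W s' = 0 ∧ ∀ x ∈ A, x ≤ s' :=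
    ⟨sSup A, hmem.1, hmem.2, fun x hx => le_csSup hAcomp.bddAbove hx⟩
  have hs'u : s' < u := lt_of_le_of_ne hs'Icc.2 (by rintro rfl; exact hWu.ne' hWs')
  have hpos : ∀ x ∈ Set.Ioc s' u, 0 < W x := by
    intro x hx
    have hx0 : 0 ≤ x := hs.trans (hs'Icc.1.trans hx.1.le)
    rcases (hWpos x hx0).lt_or_eq with h' | h'
    · exact h'
    · exfalso
      have hxA : x ∈ A := ⟨⟨hs'Icc.1.trans hx.1.le, hx.2⟩, h'.symm⟩
      exact absurd (hub x hxA) (not_le.mpr hx.1)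
  have hanti : StrictAntiOn W (Set.Icc s' u) := by
    apply strictAntiOn_of_deriv_neg (convex_Icc s' u)
    · intro x hx
      exact ((hWdiff x (hs.trans (hs'Icc.1.trans hx.1))).continuousAt).continuousWithinAt
    · intro x hx
      rw [interior_Icc] at hx
      have hx0 : 0 ≤ x := hs.trans (hs'Icc.1.trans hx.1.le)
      have hxW := hpos x ⟨hx.1, hx.2.le⟩
      have hle := hWineq x hx0 hxW
      have h1 : 0 < ε₁ * W x := mul_pos hε₁ hxW
      have h2 : 0 < ε₂ * W x ^ ((r + 1) / 2) :=
        mul_pos hε₂ (Real.rpow_pos_of_pos hxW _)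
      linarith
  have := hanti (Set.left_mem_Icc.mpr hs'u.le) (Set.right_mem_Icc.mpr hs'u.le) hs'u
  rw [hWs'] at this
  exact absurd this (not_lt.mpr hWu.le)

/-- finite-time settling. If `W : [0,∞) → ℝ` is nonnegative, differentiable
and satisfies `W' ≤ -ε₁ W - ε₂ W^{(r+1)/2}` whenever `W > 0`, with `ε₁, ε₂ > 0` and
`0 < r < 1`, then `W(t) = 0` for all `t ≥ T` where
`T = (2/(ε₁(1-r))) ln((ε₁ W(0)^{(1-r)/2} + ε₂)/ε₂)`. -/
theorem stmt11 (W : ℝ → ℝ) (ε₁ ε₂ r : ℝ)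
    (hε₁ : 0 < ε₁) (hε₂ : 0 < ε₂) (hr0 : 0 < r) (hr1 : r < 1)
    (hWpos : ∀ t, 0 ≤ t → 0 ≤ W t)
    (hWdiff : ∀ t, 0 ≤ t → DifferentiableAt ℝ W t)
    (hWineq : ∀ t, 0 ≤ t → 0 < W t →
      deriv W t ≤ -ε₁ * W t - ε₂ * (W t) ^ ((r + 1) / 2)) :
    ∀ t, (2 / (ε₁ * (1 - r))) * Real.log ((ε₁ * (W 0) ^ ((1 - r) / 2) + ε₂) / ε₂) ≤ t →
      W t = 0 := by
  intro t ht
  set q : ℝ := (1 - r) / 2 with hq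
  set p : ℝ := (r + 1) / 2 with hp
  have hq0 : 0 < q := by rw [hq]; linarith
  set a : ℝ := ε₁ * q with ha
  have ha0 : 0 < a := mul_pos hε₁ hq0
  set c : ℝ := ε₂ / ε₁ with hc
  have hc0 : 0 < c := div_pos hε₂ hε₁
  set X : ℝ := (ε₁ * (W 0) ^ q + ε₂) / ε₂ with hX
  have hW0q : 0 ≤ (W 0) ^ q := Real.rpow_nonneg (hWpos 0 le_rfl) q
  have hX1 : 1 ≤ X := by
    rw [hX, le_div_iff₀ hε₂]
    nlinarith
  have hX0 : 0 < X := lt_of_lt_of_le one_pos hX1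
  set T : ℝ := (2 / (ε₁ * (1 - r))) * Real.log X with hT
  have hT0 : 0 ≤ T := by
    have : 0 ≤ Real.log X := Real.log_nonneg hX1
    have h2 : 0 < 2 / (ε₁ * (1 - r)) := by
      apply div_pos two_pos (mul_pos hε₁ (by linarith))
    exact mul_nonneg h2.le this
  have ht0 : 0 ≤ t := hT0.trans ht
  by_contra hne
  have hWt : 0 < W t := lt_of_le_of_ne (hWpos t ht0) (Ne.symm hne)
  -- W is positive on [0, t]
  have hposIcc : ∀ s ∈ Set.Icc (0:ℝ) t, 0 < W s := by
    intro s hs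
    rcases (hWpos s hs.1).lt_or_eq with h' | h'
    · exact h'
    · exact absurd (stmt11_zero_persist W ε₁ ε₂ r hε₁ hε₂ hWpos hWdiff hWineq
        hs.1 hs.2 h'.symm) hne
  -- the Lyapunov-type comparison function
  set F : ℝ → ℝ := fun s => ((W s) ^ q + c) * Real.exp (a * s) with hF
  have hFderiv : ∀ s ∈ Set.Icc (0:ℝ) t, HasDerivAt F
      ((deriv W s * q * (W s) ^ (q - 1)) * Real.exp (a * s)
        + ((W s) ^ q + c) * (a * Real.exp (a * s))) s := by
    intro s hs
    have hWs := hposIcc s hs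
    have hWd : HasDerivAt W (deriv W s) s := (hWdiff s hs.1).hasDerivAt
    have hg : HasDerivAt (fun y => (W y) ^ q + c)
        (deriv W s * q * (W s) ^ (q - 1)) s := by
      simpa using (hWd.rpow_const (Or.inl hWs.ne')).add_const c
    have he : HasDerivAt (fun y => Real.exp (a * y)) (a * Real.exp (a * s)) s := by
      have := ((hasDerivAt_id s).const_mul a).exp
      simpa [mul_comm] using this
    exact hg.mul he
  have hFanti : AntitoneOn F (Set.Icc (0:ℝ) t) := by
    apply antitoneOn_of_deriv_nonpos (convex_Icc 0 t)
    · intro x hx; exact ((hFderiv x hx).differentiableAt).continuousAt.continuousWithinAt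
    · intro x hx
      rw [interior_Icc] at hx
      exact ((hFderiv x ⟨hx.1.le, hx.2.le⟩).differentiableAt).differentiableWithinAt
    · intro x hx
      rw [interior_Icc] at hx
      have hxI : x ∈ Set.Icc (0:ℝ) t := ⟨hx.1.le, hx.2.le⟩
      have hWx := hposIcc x hxI
      rw [(hFderiv x hxI).deriv]
      have hE : 0 < Real.exp (a * x) := Real.exp_pos _
      have hWq1 : 0 < (W x) ^ (q - 1) := Real.rpow_pos_of_pos hWx _
      have hle := hWineq x hx.1.le hWx
      -- key rpow identities
      have id1 : W x * (W x) ^ (q - 1) = (W x) ^ q := by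
        nth_rewrite 1 [← Real.rpow_one (W x)]
        rw [← Real.rpow_add hWx]
        ring_nf
      have id2 : (W x) ^ p * (W x) ^ (q - 1) = 1 := by
        rw [← Real.rpow_add hWx]
        have : p + (q - 1) = 0 := by rw [hp, hq]; ring
        rw [this, Real.rpow_zero]
      have hmul : deriv W x * q * (W x) ^ (q - 1)
          ≤ -a * (W x) ^ q - a * c := by
        have h1 : deriv W x * q * (W x) ^ (q - 1)
            ≤ (-ε₁ * W x - ε₂ * (W x) ^ p) * q * (W x) ^ (q - 1) := by
          have hqW : 0 ≤ q * (W x) ^ (q - 1) := by positivity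
          calc deriv W x * q * (W x) ^ (q - 1)
              = deriv W x * (q * (W x) ^ (q - 1)) := by ring
            _ ≤ (-ε₁ * W x - ε₂ * (W x) ^ p) * (q * (W x) ^ (q - 1)) :=
                mul_le_mul_of_nonneg_right hle hqW
            _ = (-ε₁ * W x - ε₂ * (W x) ^ p) * q * (W x) ^ (q - 1) := by ring
        have h2 : (-ε₁ * W x - ε₂ * (W x) ^ p) * q * (W x) ^ (q - 1)
            = -a * (W x) ^ q - a * c := by
          have hac : a * c = ε₂ * q := by
            rw [ha, hc]; field_simp
          calc (-ε₁ * W x - ε₂ * (W x) ^ p) * q * (W x) ^ (q - 1)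
              = -ε₁ * q * (W x * (W x) ^ (q - 1))
                - ε₂ * q * ((W x) ^ p * (W x) ^ (q - 1)) := by ring
            _ = -ε₁ * q * (W x) ^ q - ε₂ * q * 1 := by rw [id1, id2]
            _ = -a * (W x) ^ q - a * c := by rw [hac, ha]; ring
        linarith
      have : (deriv W x * q * (W x) ^ (q - 1)) * Real.exp (a * x)
          + ((W x) ^ q + c) * (a * Real.exp (a * x))
          ≤ (-a * (W x) ^ q - a * c) * Real.exp (a * x)
            + ((W x) ^ q + c) * (a * Real.exp (a * x)) := by
        gcongr
      calc (deriv W x * q * (W x) ^ (q - 1)) * Real.exp (a * x)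
            + ((W x) ^ q + c) * (a * Real.exp (a * x))
          ≤ (-a * (W x) ^ q - a * c) * Real.exp (a * x)
            + ((W x) ^ q + c) * (a * Real.exp (a * x)) := this
        _ = 0 := by ring
  have hFle : F t ≤ F 0 :=
    hFanti (Set.left_mem_Icc.mpr ht0) ⟨ht0, le_rfl⟩ ht0
  have hF0 : F 0 = (W 0) ^ q + c := by simp [hF]
  -- exp (a * t) ≥ X
  have hr' : (1:ℝ) - r ≠ 0 := by linarith
  have haT : a * T = Real.log X := by
    have h1 : a * (2 / (ε₁ * (1 - r))) = 1 := by
      rw [ha, hq]; field_simp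
    rw [hT, ← mul_assoc, h1, one_mul]
  have hexpT : Real.exp (a * T) = X := by rw [haT, Real.exp_log hX0]
  have hexp : X ≤ Real.exp (a * t) := by
    rw [← hexpT]
    exact Real.exp_le_exp.mpr (mul_le_mul_of_nonneg_left ht ha0.le)
  have hcX : c * X = (W 0) ^ q + c := by
    rw [hc, hX]
    field_simp
  have hWtq : 0 < (W t) ^ q := Real.rpow_pos_of_pos hWt q
  have hchain : ((W t) ^ q + c) * X ≤ c * X := by
    calc ((W t) ^ q + c) * X ≤ ((W t) ^ q + c) * Real.exp (a * t) := by
          have : 0 < (W t) ^ q + c := by positivity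
          exact mul_le_mul_of_nonneg_left hexp this.le
      _ = F t := rfl
      _ ≤ F 0 := hFle
      _ = c * X := by rw [hF0, hcX]
  nlinarith
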